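/- Let G be an infinite, locally finite, connected simple graph, let U : E → [0,1] be injective, and let ε ∈ (0,1). Define ξ := {e ∈ E : 1 − U(e) ≥ (1 − ε)(1 − Z_f(e))}. Then ξ intersects ∂_E W for every set of vertices W with ∅ ≠ W ≠ V; consequently, the spanning subgraph (V, ξ) is connected. (Note ξ ⊇ F_f(U).) -/
import Mathlib


open SimpleGraph

/-- The set of edges of `G` whose endpoints cannot be joined by a path all of whose
edges have strictly smaller label: the (free) minimal spanning forest / tree of `G`. -/
def mstEdges {V α : Type*} [LinearOrder α] (G : SimpleGraph V) (U : Sym2 V → α) :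
    Set (Sym2 V) :=
  {e | e ∈ G.edgeSet ∧ ∀ a b : V, e = s(a, b) →
    ∀ p : G.Walk a b, p.IsPath → ∃ f ∈ p.edges, U e ≤ U f}

/-- A one-sided infinite simple path in `G`. -/
def IsRay {V : Type*} (G : SimpleGraph V) (r : ℕ → V) : Prop :=
  Function.Injective r ∧ ∀ n : ℕ, G.Adj (r n) (r (n + 1))

/-- The edges of a one-sided infinite path. -/
def rayEdges {V : Type*} (r : ℕ → V) : Set (Sym2 V) :=
  Set.range fun n : ℕ => s(r n, r (n + 1))

/-- The wired minimal spanning forest of `G`: edges such that every extended path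
(finite simple path, or pair of disjoint rays from the two endpoints) joining the
endpoints contains an edge of label at least as large. -/
def wmsfEdges {V : Type*} (G : SimpleGraph V) (U : Sym2 V → ℝ) : Set (Sym2 V) :=
  {e | e ∈ G.edgeSet ∧ ∀ a b : V, e = s(a, b) →
    (∀ p : G.Walk a b, p.IsPath → ∃ f ∈ p.edges, U e ≤ U f) ∧
    (∀ r₁ r₂ : ℕ → V, IsRay G r₁ → IsRay G r₂ → r₁ 0 = a → r₂ 0 = b →
      (∀ m n : ℕ, r₁ m ≠ r₂ n) →
      ∃ f ∈ rayEdges r₁ ∪ rayEdges r₂, U e ≤ U f)}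

/-- The edges of `G` joining `W` to its complement. -/
def cutEdges {V : Type*} (G : SimpleGraph V) (W : Set V) : Set (Sym2 V) :=
  {e | e ∈ G.edgeSet ∧ ∃ a b : V, e = s(a, b) ∧ a ∈ W ∧ b ∉ W}

/-- A bi-infinite simple path in `G`. -/
def IsBiRay {V : Type*} (G : SimpleGraph V) (r : ℤ → V) : Prop :=
  Function.Injective r ∧ ∀ n : ℤ, G.Adj (r n) (r (n + 1))

/-- The edges of a bi-infinite simple path. -/
def biRayEdges {V : Type*} (r : ℤ → V) : Set (Sym2 V) :=
  Set.range fun n : ℤ => s(r n, r (n + 1))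

open scoped Classical in
/-- `Z_f(e)` as a real number: the infimum over simple paths in `G \ {e}`
connecting the endpoints of `e` of the maximum label along the path, and `1`
if there is no such path. -/
noncomputable def ZfR {V : Type*} (G : SimpleGraph V) (U : Sym2 V → ℝ) (e : Sym2 V) : ℝ :=
  if ∃ (a b : V) (p : G.Walk a b), e = s(a, b) ∧ p.IsPath ∧ e ∉ p.edges then
    sInf {x : ℝ | ∃ (a b : V) (p : G.Walk a b), e = s(a, b) ∧ p.IsPath ∧ e ∉ p.edges ∧
      x = sSup {y : ℝ | ∃ f ∈ p.edges, y = U f}}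
  else 1

/-- Any walk from inside `W` to outside `W` contains a cut edge. -/
lemma walk_crosses {V : Type*} {G : SimpleGraph V} {W : Set V} :
    ∀ {a b : V} (p : G.Walk a b), a ∈ W → b ∉ W → ∃ f ∈ p.edges, f ∈ cutEdges G W := by
  intro a b p
  induction p with
  | nil => exact fun h h' => absurd h h'
  | @cons a c b hadj q ih =>
    intro ha hb
    by_cases hc : c ∈ W
    · obtain ⟨f, hf, hfc⟩ := ih hc hb
      exact ⟨f, by simp [hf], hfc⟩
    · exact ⟨s(a, c), by simp, hadj, a, c, rfl, ha, hc⟩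

/-- Any walk between the endpoints of a cut edge contains a cut edge. -/
lemma walk_crosses' {V : Type*} {G : SimpleGraph V} {W : Set V} {e : Sym2 V}
    (he : e ∈ cutEdges G W) {a b : V} (hab : e = s(a, b)) (p : G.Walk a b) :
    ∃ f ∈ p.edges, f ∈ cutEdges G W := by
  obtain ⟨-, x, y, hexy, hx, hy⟩ := he
  rw [hab, Sym2.eq_iff] at hexy
  rcases hexy with ⟨rfl, rfl⟩ | ⟨rfl, rfl⟩
  · exact walk_crosses p hx hy
  · obtain ⟨f, hf, hfc⟩ := walk_crosses p.reverse hx hy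
    exact ⟨f, by simpa using hf, hfc⟩

/-- For an injective labeling `U : E → [0,1]` of an infinite,
locally finite, connected graph and `ε ∈ (0,1)`, the set
`ξ = {e : 1 - U(e) ≥ (1-ε)(1 - Z_f(e))}` (which contains the free minimal
spanning forest) meets every nonempty proper cut `∂_E W`; consequently the
spanning subgraph `(V, ξ)` is connected. -/
theorem stmt17 {V : Type*} [Infinite V] (G : SimpleGraph V)
    (hlf : ∀ v : V, (G.neighborSet v).Finite) (hG : G.Connected)
    (U : Sym2 V → ℝ) (hU : Set.InjOn U G.edgeSet)
    (hU01 : ∀ e ∈ G.edgeSet, U e ∈ Set.Icc (0 : ℝ) 1)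
    (ε : ℝ) (hε : ε ∈ Set.Ioo (0 : ℝ) 1) :
    (∀ W : Set V, W.Nonempty → W ≠ Set.univ →
      ∃ e ∈ cutEdges G W, 1 - U e ≥ (1 - ε) * (1 - ZfR G U e)) ∧
    (SimpleGraph.fromEdgeSet
      {e : Sym2 V | e ∈ G.edgeSet ∧ 1 - U e ≥ (1 - ε) * (1 - ZfR G U e)}).Connected := by
  obtain ⟨hε0, hε1⟩ := hε
  have key : ∀ W : Set V, W.Nonempty → W ≠ Set.univ →
      ∃ e ∈ cutEdges G W, 1 - U e ≥ (1 - ε) * (1 - ZfR G U e) := by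
    rintro W ⟨a, ha⟩ hWu
    obtain ⟨b, hb⟩ : ∃ b, b ∉ W := by
      by_contra h; push_neg at h; exact hWu (Set.eq_univ_of_forall h)
    obtain ⟨f0, -, hf0cut⟩ := walk_crosses ((hG.preconnected a b).some) ha hb
    set S : Set ℝ := U '' cutEdges G W with hS
    have hSne : S.Nonempty := ⟨U f0, f0, hf0cut, rfl⟩
    have hSbd : BddBelow S := ⟨0, by rintro x ⟨f, hf, rfl⟩; exact (hU01 f hf.1).1⟩
    set I := sInf S with hI
    have hIle : ∀ f ∈ cutEdges G W, I ≤ U f := fun f hf => csInf_le hSbd ⟨f, hf, rfl⟩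
    -- key bound: for a cut edge `e` and a walk `p` between its endpoints,
    -- the sup of labels on `p` is at least `U f` for some cut edge `f` on `p`.
    have hsup : ∀ e ∈ cutEdges G W, ∀ (a' b' : V) (p : G.Walk a' b'), e = s(a', b') →
        ∃ f ∈ p.edges, f ∈ cutEdges G W ∧
          U f ≤ sSup {y : ℝ | ∃ f ∈ p.edges, y = U f} := by
      intro e he a' b' p hab
      obtain ⟨f, hf, hfc⟩ := walk_crosses' he hab p
      refine ⟨f, hf, hfc, le_csSup ⟨1, ?_⟩ ⟨f, hf, rfl⟩⟩
      rintro y ⟨g, hg, rfl⟩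
      exact (hU01 g (p.edges_subset_edgeSet hg)).2
    by_cases hI1 : I < 1
    · -- choose a cut edge with label close to the infimum
      have hδ : (0 : ℝ) < ε * (1 - I) := by nlinarith
      obtain ⟨x, ⟨e, hecut, rfl⟩, hex⟩ :=
        exists_lt_of_csInf_lt hSne (show sInf S < I + ε * (1 - I) by linarith)
      refine ⟨e, hecut, ?_⟩
      have hZI : I ≤ ZfR G U e := by
        unfold ZfR
        split_ifs with hcond
        · refine le_csInf ?_ ?_
          · obtain ⟨a', b', p, h1, h2, h3⟩ := hcond
            exact ⟨_, a', b', p, h1, h2, h3, rfl⟩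
          · rintro x ⟨a', b', p, hab, -, -, rfl⟩
            obtain ⟨f, -, hfc, hfle⟩ := hsup e hecut a' b' p hab
            exact le_trans (hIle f hfc) hfle
        · exact le_trans (hIle f0 hf0cut) (hU01 f0 hf0cut.1).2
      nlinarith [mul_nonneg (by linarith : (0:ℝ) ≤ 1 - ε)
        (by linarith : (0:ℝ) ≤ ZfR G U e - I)]
    · -- all cut edges have label 1; there is exactly one, and its `Z_f` is 1
      push_neg at hI1
      have hf01 : U f0 = 1 :=
        le_antisymm (hU01 f0 hf0cut.1).2 (le_trans hI1 (hIle f0 hf0cut))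
      refine ⟨f0, hf0cut, ?_⟩
      have hZ1 : ZfR G U f0 = 1 := by
        unfold ZfR
        rw [if_neg]
        rintro ⟨a', b', p, hab, -, hep⟩
        obtain ⟨f, hf, hfc, -⟩ := hsup f0 hf0cut a' b' p hab
        have hUf1 : U f = 1 :=
          le_antisymm (hU01 f hfc.1).2 (le_trans hI1 (hIle f hfc))
        have : f = f0 := hU hfc.1 hf0cut.1 (by rw [hUf1, hf01])
        exact hep (this ▸ hf)
      rw [hZ1, hf01]
      norm_num
  refine ⟨key, ?_⟩
  rw [connected_iff]
  refine ⟨?_, inferInstance⟩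
  intro u v
  by_contra hreach
  set H := SimpleGraph.fromEdgeSet
    {e : Sym2 V | e ∈ G.edgeSet ∧ 1 - U e ≥ (1 - ε) * (1 - ZfR G U e)} with hH
  set W := {x : V | H.Reachable u x} with hW
  have hWne : W.Nonempty := ⟨u, Reachable.refl u⟩
  have hWu : W ≠ Set.univ := by
    intro h
    have : v ∈ W := h ▸ Set.mem_univ v
    exact hreach this
  obtain ⟨e, ⟨heE, x, y, hexy, hx, hy⟩, hineq⟩ := key W hWne hWu
  have hGadj : G.Adj x y := by rw [hexy] at heE; exact (SimpleGraph.mem_edgeSet G).mp heE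
  have hne : x ≠ y := hGadj.ne
  have hadj : H.Adj x y := by
    rw [hH, SimpleGraph.fromEdgeSet_adj]
    exact ⟨⟨hexy ▸ heE, hexy ▸ hineq⟩, hne⟩
  exact hy (hx.trans hadj.reachable)
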